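/- arXiv:2403.03103 — 4 statements merged into one kernel-verified Lean document; each statement's English description precedes it below -/
import Mathlib

section
/- Consider a kernel K : X × X → ℝ that is G-invariant (K(ρ(g)x, ρ(g)x') = K(x, x')), training inputs x_1,…,x_n closed under the G-action via a permutation π_g (ρ(g)x_i = x_{π_g(i)}), training labels y ∈ ℝⁿ that are invariant (y_{π_g(i)} = y_i for all g, i), and an invertible Gram matrix Θ ∈ GL(n,ℝ) with Θ_{ij} = K(x_i, x_j). Define the predictor μ(x) = Σ_{i,j} K(x, x_i) [Θ⁻¹ (I − exp(−η t Θ))]_{ij} y_j. Then μ is G-invariant: μ(ρ(g)x) = μ(x) for all g ∈ G and x ∈ X. -/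
open NormedSpace in
private lemma exp_reindex_aux {n : ℕ} (e : Fin n ≃ Fin n) (A : Matrix (Fin n) (Fin n) ℝ) :
    Matrix.reindexAlgEquiv ℝ ℝ e (exp A) = exp (Matrix.reindexAlgEquiv ℝ ℝ e A) := by
  letI : SeminormedRing (Matrix (Fin n) (Fin n) ℝ) := Matrix.linftyOpSemiNormedRing
  letI : NormedRing (Matrix (Fin n) (Fin n) ℝ) := Matrix.linftyOpNormedRing
  letI : NormedAlgebra ℝ (Matrix (Fin n) (Fin n) ℝ) := Matrix.linftyOpNormedAlgebra
  letI : NormedAlgebra ℚ (Matrix (Fin n) (Fin n) ℝ) := NormedAlgebra.restrictScalars ℚ ℝ _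
  exact map_exp (Matrix.reindexAlgEquiv ℝ ℝ e) ((continuous_id.matrix_reindex e e)) A

open NormedSpace in
/-- Emergent invariance of the NTK mean prediction (invariant-label case): with a
`G`-invariant kernel, training data closed under the group action, invariant labels and an
invertible Gram matrix, the predictor
`μ(x) = ∑ i j, K(x, x_i) [Θ⁻¹ (I - exp(-η t Θ))]_{ij} y_j` is `G`-invariant. -/
theorem ntk_mean_invariant
    {G X : Type*} [Group G] [AddCommGroup X] [Module ℝ X]
    (ρ : G →* (X ≃ₗ[ℝ] X)) (K : X → X → ℝ)
    (hK : ∀ (g : G) (x x' : X), K (ρ g x) (ρ g x') = K x x')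
    {n : ℕ} (xs : Fin n → X) (π : G → Equiv.Perm (Fin n))
    (hxs : ∀ (g : G) (i : Fin n), ρ g (xs i) = xs (π g i))
    (y : Fin n → ℝ) (hy : ∀ (g : G) (i : Fin n), y (π g i) = y i)
    (Θ : Matrix (Fin n) (Fin n) ℝ) (hΘ : Θ = Matrix.of fun i j => K (xs i) (xs j))
    (hΘunit : IsUnit Θ.det) (η t : ℝ)
    (μ : X → ℝ)
    (hμ : μ = fun x => ∑ i, ∑ j,
      K x (xs i) * (Θ⁻¹ * (1 - exp ((-(η * t)) • Θ))) i j * y j) :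
    ∀ (g : G) (x : X), μ (ρ g x) = μ x := by
  intro g x
  set M : Matrix (Fin n) (Fin n) ℝ := Θ⁻¹ * (1 - exp ((-(η * t)) • Θ)) with hM
  -- the reindexing algebra equivalence associated with π g
  set e : Fin n ≃ Fin n := (π g).symm with he
  have hf : ∀ (A : Matrix (Fin n) (Fin n) ℝ) i j,
      Matrix.reindexAlgEquiv ℝ ℝ e A i j = A (π g i) (π g j) := by
    intro A i j
    simp [Matrix.reindexAlgEquiv_apply, Matrix.reindex_apply, Matrix.submatrix_apply, he]
  -- Θ is fixed by the reindexing
  have hΘfix : Matrix.reindexAlgEquiv ℝ ℝ e Θ = Θ := by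
    ext i j
    rw [hf]
    simp only [hΘ, Matrix.of_apply]
    rw [← hxs, ← hxs, hK]
  -- hence so is Θ⁻¹
  have hΘinvfix : Matrix.reindexAlgEquiv ℝ ℝ e Θ⁻¹ = Θ⁻¹ := by
    refine (Matrix.inv_eq_left_inv ?_).symm
    have : Matrix.reindexAlgEquiv ℝ ℝ e Θ⁻¹ * Θ
        = Matrix.reindexAlgEquiv ℝ ℝ e (Θ⁻¹ * Θ) := by rw [map_mul, hΘfix]
    rw [this, Matrix.nonsing_inv_mul Θ hΘunit, map_one]
  -- and so is M
  have hMfix : Matrix.reindexAlgEquiv ℝ ℝ e M = M := by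
    rw [hM, map_mul, hΘinvfix, map_sub, map_one, exp_reindex_aux, map_smul, hΘfix]
  have hMij : ∀ i j, M (π g i) (π g j) = M i j := by
    intro i j
    rw [← hf M i j, hMfix]
  -- now the computation
  rw [hμ]
  simp only [← hM]
  have key : ∀ i : Fin n, ∑ j, M i j * y j = ∑ j, M (π g i) j * y j := by
    intro i
    rw [← Equiv.sum_comp (π g) (fun j => M (π g i) j * y j)]
    exact Finset.sum_congr rfl fun j _ => by rw [hMij, hy]
  calc ∑ i, ∑ j, K (ρ g x) (xs i) * M i j * y j
      = ∑ i, ∑ j, K (ρ g x) (xs (π g i)) * M (π g i) j * y j := by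
        rw [← Equiv.sum_comp (π g) (fun i => ∑ j, K (ρ g x) (xs i) * M i j * y j)]
    _ = ∑ i, ∑ j, K x (xs i) * M (π g i) j * y j := by
        refine Finset.sum_congr rfl fun i _ => Finset.sum_congr rfl fun j _ => ?_
        rw [← hxs, hK]
    _ = ∑ i, ∑ j, K x (xs i) * M i j * y j := by
        refine Finset.sum_congr rfl fun i _ => ?_
        simp_rw [mul_assoc]
        rw [← Finset.mul_sum, ← Finset.mul_sum, ← key]
end

section
/- Under the same assumptions as above but with labels transformed by an orthogonal representation ρ_Y, i.e. training pairs (x_i, y_i) ∈ X × ℝ^k with ρ_X(g)x_i = x_{π_g(i)} and ρ_Y(g)y_i = y_{π_g(i)}, a G-invariant scalar kernel K, and predictor μ(x) = Σ_{i,j} K(x, x_i) [Θ⁻¹(I − exp(−η t Θ))]_{ij} y_j ∈ ℝ^k, the predictor is equivariant: μ(ρ_X(g)x) = ρ_Y(g) μ(x) for all g ∈ G, x ∈ X. -/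
open NormedSpace Matrix in
/-- Emergent equivariance of the NTK mean prediction: with labels in `ℝ^k` transforming
under an orthogonal representation `ρY` and a `G`-invariant scalar kernel acting scalarly
on the label channels, the predictor
`μ(x) = ∑ i j, K(x, x_i) [Θ⁻¹ (I - exp(-η t Θ))]_{ij} y_j ∈ ℝ^k` is `G`-equivariant:
`μ(ρX(g) x) = ρY(g) μ(x)`. -/
theorem ntk_mean_equivariant
    {G X : Type*} [Group G] [AddCommGroup X] [Module ℝ X]
    (ρX : G →* (X ≃ₗ[ℝ] X)) {k : ℕ}
    (ρY : G →* Matrix (Fin k) (Fin k) ℝ)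
    (hρYorth : ∀ g : G, (ρY g)ᵀ * ρY g = 1)
    (K : X → X → ℝ)
    (hK : ∀ (g : G) (x x' : X), K (ρX g x) (ρX g x') = K x x')
    {n : ℕ} (xs : Fin n → X) (ys : Fin n → (Fin k → ℝ))
    (π : G → Equiv.Perm (Fin n))
    (hxs : ∀ (g : G) (i : Fin n), ρX g (xs i) = xs (π g i))
    (hys : ∀ (g : G) (i : Fin n), (ρY g).mulVec (ys i) = ys (π g i))
    (Θ : Matrix (Fin n) (Fin n) ℝ) (hΘ : Θ = Matrix.of fun i j => K (xs i) (xs j))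
    (hΘunit : IsUnit Θ.det) (η t : ℝ)
    (μ : X → (Fin k → ℝ))
    (hμ : μ = fun x a => ∑ i, ∑ j,
      K x (xs i) * (Θ⁻¹ * (1 - exp ((-(η * t)) • Θ))) i j * ys j a) :
    ∀ (g : G) (x : X), μ (ρX g x) = (ρY g).mulVec (μ x) := by
  intro g x
  set σ := π g with hσdef
  -- the algebra equivalence given by simultaneous reindexing
  set e : Matrix (Fin n) (Fin n) ℝ ≃ₐ[ℝ] Matrix (Fin n) (Fin n) ℝ :=
    Matrix.reindexAlgEquiv ℝ ℝ σ.symm with he_def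
  have he : ∀ A : Matrix (Fin n) (Fin n) ℝ, e A = A.submatrix σ σ := by
    intro A; rfl
  have hΘσ : e Θ = Θ := by
    rw [he]
    ext i j
    simp only [hΘ, submatrix_apply, Matrix.of_apply]
    rw [← hxs g i, ← hxs g j, hK]
  -- e commutes with exp
  have hcont : Continuous e := by
    exact LinearMap.continuous_of_finiteDimensional
      (e.toLinearEquiv.toLinearMap)
  let L : Matrix (Fin n) (Fin n) ℝ ≃L[ℝ] Matrix (Fin n) (Fin n) ℝ :=
    { e.toLinearEquiv with
      continuous_toFun := hcont
      continuous_invFun := LinearMap.continuous_of_finiteDimensional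
        (e.symm.toLinearEquiv.toLinearMap) }
  have hexp : ∀ A : Matrix (Fin n) (Fin n) ℝ, e (exp A) = exp (e A) := by
    intro A
    have h1 : e (exp A) = L (exp A) := rfl
    rw [h1, exp_eq_tsum (𝕂 := ℝ)]
    show L (∑' (m : ℕ), ((m.factorial : ℝ))⁻¹ • A ^ m)
      = ∑' (m : ℕ), ((m.factorial : ℝ))⁻¹ • (e A) ^ m
    rw [L.map_tsum]
    congr 1
    funext m
    rw [_root_.map_smul]
    congr 1
    exact map_pow e A m
  set M := Θ⁻¹ * (1 - exp ((-(η * t)) • Θ)) with hMdef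
  -- the invariance of M under the permutation
  have hΘinv : e Θ⁻¹ = Θ⁻¹ := by
    have h1 : Θ⁻¹ * Θ = 1 := Matrix.nonsing_inv_mul Θ hΘunit
    have h2 : e Θ⁻¹ * Θ = 1 := by
      calc e Θ⁻¹ * Θ = e Θ⁻¹ * e Θ := by rw [hΘσ]
        _ = e (Θ⁻¹ * Θ) := (map_mul e _ _).symm
        _ = 1 := by rw [h1, _root_.map_one]
    have := Matrix.inv_eq_left_inv h2
    rw [← this]
  have hMσ : M.submatrix σ σ = M := by
    rw [← he]
    rw [hMdef, _root_.map_mul, hΘinv, _root_.map_sub, _root_.map_one, hexp, _root_.map_smul, hΘσ]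
  have hMapp : ∀ i j, M (σ i) (σ j) = M i j := by
    intro i j
    conv_rhs => rw [← hMσ]
    rfl
  funext a
  rw [hμ]
  simp only
  calc ∑ i, ∑ j, K (ρX g x) (xs i) * M i j * ys j a
      = ∑ i, ∑ j, K (ρX g x) (xs (σ i)) * M (σ i) (σ j) * ys (σ j) a := by
        rw [← Equiv.sum_comp σ (fun i => ∑ j, K (ρX g x) (xs i) * M i j * ys j a)]
        refine Finset.sum_congr rfl fun i _ => ?_
        rw [← Equiv.sum_comp σ (fun j => K (ρX g x) (xs (σ i)) * M (σ i) j * ys j a)]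
    _ = ∑ i, ∑ j, K x (xs i) * M i j * ∑ b, ρY g a b * ys j b := by
        refine Finset.sum_congr rfl fun i _ => Finset.sum_congr rfl fun j _ => ?_
        rw [← hxs g i, hK, hMapp, ← hys g j]
        simp [Matrix.mulVec, dotProduct]
    _ = ∑ b, ρY g a b * ∑ i, ∑ j, K x (xs i) * M i j * ys j b := by
        simp only [Finset.mul_sum]
        conv_lhs => enter [2, i]; rw [Finset.sum_comm]
        rw [Finset.sum_comm]
        exact Finset.sum_congr rfl fun b _ => Finset.sum_congr rfl fun i _ =>
          Finset.sum_congr rfl fun j _ => by ring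
    _ = (ρY g).mulVec (fun a => ∑ i, ∑ j, K x (xs i) * M i j * ys j a) a := by
        simp [Matrix.mulVec, dotProduct]
end

section
/- Let K : X × X → ℝ be a G-invariant symmetric kernel, training inputs closed under the G-action via permutation π_g with permutation matrix Π(g), Gram matrices Θ and 𝒦 (of two G-invariant kernels) both commuting with Π(g), Θ invertible. Define, for reals η, t, T = I − exp(−ηΘt) and Σ-terms Σ¹(x,x') = Σ_{ij} Θ(x,x_i)[Θ⁻¹ T 𝒦 T Θ⁻¹]_{ij} Θ(x_j,x'), where Θ(x, x_i) is the kernel evaluation. Then Σ¹ is G-invariant: Σ¹(ρ(g)x, ρ(g)x') = Σ¹(x, x'). -/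
open NormedSpace in
/-- Invariance of the ensemble covariance term `Σ¹`: with two `G`-invariant symmetric
kernels `Θk`, `Kk`, training inputs closed under the group action, both Gram matrices
commuting with the permutation matrices, and the Gram matrix of `Θk` invertible,
`Σ¹(x,x') = ∑ i j, Θk(x,x_i) [Θ⁻¹ T 𝒦 T Θ⁻¹]_{ij} Θk(x_j,x')` with
`T = I - exp(-ηΘt)` is `G`-invariant. -/
theorem covariance_term_invariant
    {G X : Type*} [Group G] [AddCommGroup X] [Module ℝ X]
    (ρ : G →* (X ≃ₗ[ℝ] X))
    (Θk Kk : X → X → ℝ)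
    (hΘsymm : ∀ x x', Θk x x' = Θk x' x) (hKsymm : ∀ x x', Kk x x' = Kk x' x)
    (hΘinv : ∀ (g : G) (x x' : X), Θk (ρ g x) (ρ g x') = Θk x x')
    (hKinv : ∀ (g : G) (x x' : X), Kk (ρ g x) (ρ g x') = Kk x x')
    {n : ℕ} (xs : Fin n → X) (π : G → Equiv.Perm (Fin n))
    (hxs : ∀ (g : G) (i : Fin n), ρ g (xs i) = xs (π g i))
    (ΘM KM : Matrix (Fin n) (Fin n) ℝ)
    (hΘM : ΘM = Matrix.of fun i j => Θk (xs i) (xs j))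
    (hKM : KM = Matrix.of fun i j => Kk (xs i) (xs j))
    (hΘMunit : IsUnit ΘM.det)
    (P : G → Matrix (Fin n) (Fin n) ℝ)
    (hPdef : ∀ g, P g = Matrix.of fun i j => if j = π g i then (1 : ℝ) else 0)
    (hPΘ : ∀ g, P g * ΘM = ΘM * P g) (hPK : ∀ g, P g * KM = KM * P g)
    (η t : ℝ)
    (T : Matrix (Fin n) (Fin n) ℝ) (hT : T = 1 - exp ((-(η * t)) • ΘM))
    (Sig1 : X → X → ℝ)
    (hSig1 : Sig1 = fun x x' => ∑ i, ∑ j,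
      Θk x (xs i) * (ΘM⁻¹ * T * KM * T * ΘM⁻¹) i j * Θk (xs j) x') :
    ∀ (g : G) (x x' : X), Sig1 (ρ g x) (ρ g x') = Sig1 x x' := by
  intro g x x'
  set M : Matrix (Fin n) (Fin n) ℝ := ΘM⁻¹ * T * KM * T * ΘM⁻¹ with hM
  -- P g commutes with everything
  have hcomm : ∀ h : G, Commute (P h) M := by
    intro h
    have hΘ : Commute (P h) ΘM := hPΘ h
    have hinv : Commute (P h) ΘM⁻¹ := by
      show P h * ΘM⁻¹ = ΘM⁻¹ * P h
      have e1 : ΘM⁻¹ * (P h * ΘM) * ΘM⁻¹ = ΘM⁻¹ * P h := by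
        rw [← mul_assoc, mul_assoc (ΘM⁻¹ * P h), Matrix.mul_nonsing_inv _ hΘMunit, mul_one]
      have e2 : ΘM⁻¹ * (ΘM * P h) * ΘM⁻¹ = P h * ΘM⁻¹ := by
        rw [← mul_assoc, Matrix.nonsing_inv_mul _ hΘMunit, one_mul]
      calc P h * ΘM⁻¹ = ΘM⁻¹ * (ΘM * P h) * ΘM⁻¹ := e2.symm
        _ = ΘM⁻¹ * (P h * ΘM) * ΘM⁻¹ := by rw [hPΘ]
        _ = ΘM⁻¹ * P h := e1
    have hexp : Commute (P h) (exp ((-(η * t)) • ΘM)) :=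
      Commute.exp_right (hΘ.smul_right _)
    have hTc : Commute (P h) T := by
      rw [hT]; exact (Commute.one_right _).sub_right hexp
    exact ((((hinv.mul_right hTc).mul_right (hPK h)).mul_right hTc).mul_right hinv)
  -- entrywise consequence
  have hentry : ∀ (h : G) (i j : Fin n), M (π h i) (π h j) = M i j := by
    intro h i j
    have := congrFun (congrFun (hcomm h).eq i) (π h j)
    rw [hPdef] at this
    simp only [Matrix.mul_apply, Matrix.of_apply, ite_mul, mul_ite, one_mul, zero_mul,
      mul_one, mul_zero, Equiv.apply_eq_iff_eq, Finset.sum_ite_eq, Finset.sum_ite_eq',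
      Finset.mem_univ, if_true] at this
    exact this
  have hρ : ∀ y : X, ρ g⁻¹ (ρ g y) = y := by
    intro y
    have h1 : ρ g⁻¹ * ρ g = 1 := by rw [← map_mul, inv_mul_cancel, map_one]
    calc ρ g⁻¹ (ρ g y) = (ρ g⁻¹ * ρ g) y := rfl
      _ = (1 : X ≃ₗ[ℝ] X) y := by rw [h1]
      _ = y := rfl
  have hΘx : ∀ i, Θk (ρ g x) (xs i) = Θk x (xs (π g⁻¹ i)) := by
    intro i
    rw [← hΘinv g⁻¹ (ρ g x) (xs i), hρ, hxs]
  have hΘx' : ∀ j, Θk (xs j) (ρ g x') = Θk (xs (π g⁻¹ j)) x' := by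
    intro j
    rw [← hΘinv g⁻¹ (xs j) (ρ g x'), hρ, hxs]
  rw [hSig1]
  simp only [hΘx, hΘx']
  refine Fintype.sum_equiv (π g⁻¹) _ _ (fun i => ?_)
  refine Fintype.sum_equiv (π g⁻¹) _ _ (fun j => ?_)
  rw [hentry g⁻¹ i j]
end

section
/- Let Θ be an n×n invertible real matrix, Π a permutation matrix with Π Θ = Θ Π, y ∈ ℝⁿ, and suppose Π y = λ y for λ ∈ {+1, −1} (labels in a one-dimensional sign representation). Define μ(x) = v(x)ᵀ Θ⁻¹ (I − exp(−ηΘt)) y for a feature map v : X → ℝⁿ satisfying v(ρ(g)x) = Πᵀ v(x). Then μ(ρ(g)x) = λ μ(x). -/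
open NormedSpace Matrix in
/-- Emergent equivariance for one-dimensional sign representations: if `Θ` is invertible
and commutes with a permutation matrix `Π`, the labels satisfy `Π y = λ y` with
`λ ∈ {+1, -1}`, and the feature map `v` satisfies `v(ρ(g) x) = Πᵀ v(x)`, then the
predictor `μ(x) = v(x)ᵀ Θ⁻¹ (I - exp(-ηΘt)) y` satisfies `μ(ρ(g) x) = λ μ(x)`. -/
theorem sign_representation_equivariance
    {X : Type*} {n : ℕ}
    (Θ : Matrix (Fin n) (Fin n) ℝ) (hΘ : IsUnit Θ.det)
    (π : Equiv.Perm (Fin n))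
    (P : Matrix (Fin n) (Fin n) ℝ)
    (hP : P = Matrix.of fun i j => if j = π i then (1 : ℝ) else 0)
    (hcomm : P * Θ = Θ * P)
    (y : Fin n → ℝ) (lam : ℝ) (hlam : lam = 1 ∨ lam = -1)
    (hy : P.mulVec y = lam • y)
    (v : X → (Fin n → ℝ)) (T : X → X)
    (hv : ∀ x, v (T x) = Pᵀ.mulVec (v x))
    (η t : ℝ) (μ : X → ℝ)
    (hμ : μ = fun x => v x ⬝ᵥ (Θ⁻¹ * (1 - exp ((-(η * t)) • Θ))).mulVec y) :
    ∀ x, μ (T x) = lam * μ x := by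
  intro x
  set M : Matrix (Fin n) (Fin n) ℝ := Θ⁻¹ * (1 - exp ((-(η * t)) • Θ)) with hM
  have hPΘ : Commute P Θ := hcomm
  have hPinv : Commute P Θ⁻¹ := by
    have h : Invertible Θ := Θ.invertibleOfIsUnitDet hΘ
    rw [← Matrix.invOf_eq_nonsing_inv]
    exact hPΘ.invOf_right
  have hPexp : Commute P (exp ((-(η * t)) • Θ)) :=
    (hPΘ.smul_right (-(η * t))).exp_right
  have hPM : P * M = M * P := by
    have : Commute P M := hPinv.mul_right ((Commute.one_right P).sub_right hPexp)
    exact this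
  have key : P.mulVec (M.mulVec y) = lam • (M.mulVec y) := by
    rw [Matrix.mulVec_mulVec, hPM, ← Matrix.mulVec_mulVec, hy, Matrix.mulVec_smul]
  simp only [hμ, hv]
  calc Pᵀ.mulVec (v x) ⬝ᵥ M.mulVec y
      = v x ⬝ᵥ P.mulVec (M.mulVec y) := by
        rw [Matrix.mulVec_transpose, ← Matrix.dotProduct_mulVec]
    _ = lam * (v x ⬝ᵥ M.mulVec y) := by rw [key, dotProduct_smul, smul_eq_mul]
end
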